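/- Let A₁,…,A_{n+2} be points in ℝ^d (regarded as vectors) and let α₁,…,α_{n+2} be real numbers with Σᵢ αᵢ = 0 and Σᵢ αᵢAᵢ = 0. For 1 ≤ k ≤ n and points P, Q ∈ ℝ^d define c_k(P,Q) := Σ_{1≤i₁<⋯<i_k≤n+2} α_{i₁}⋯α_{i_k} · det(⟨A_{i_a} − P, A_{i_b} − Q⟩)_{1≤a,b≤k}. Then c_k(P,Q) is independent of the choice of P and Q, i.e. c_k(P,Q) = c_k(P',Q') for all P, Q, P', Q' ∈ ℝ^d. -/

import Mathlib

open Finset Matrix Polynomial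

/-- If all rows outside `s` are standard basis rows, the determinant reduces to the
principal minor on `s`. -/
lemma det_eq_det_submatrix_of_single {ι R : Type*} [Fintype ι] [DecidableEq ι] [CommRing R]
    (M : Matrix ι ι R) (s : Finset ι) (h : ∀ i ∉ s, M i = Pi.single i 1) :
    M.det = (M.submatrix (fun a : ↥s => (a : ι)) (fun a : ↥s => (a : ι))).det := by
  classical
  let e : {x // x ∈ s} ⊕ {x // ¬ x ∈ s} ≃ ι := Equiv.sumCompl (· ∈ s)
  have he : (M.submatrix e e) = Matrix.fromBlocks
      (M.submatrix (fun a : ↥s => (a : ι)) (fun a : ↥s => (a : ι)))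
      (M.submatrix (fun a : ↥s => (a : ι)) (fun b : {x // ¬ x ∈ s} => (b : ι)))
      0 1 := by
    ext i j
    cases i with
    | inl a =>
      cases j with
      | inl b => rfl
      | inr b => rfl
    | inr a =>
      cases j with
      | inl b =>
        show M a.1 b.1 = (0 : Matrix _ _ R) a b
        rw [h a.1 a.2, Pi.single_apply]
        have : b.1 ≠ a.1 := fun hh => a.2 (hh ▸ b.2)
        simp [this]
      | inr b =>
        show M a.1 b.1 = (1 : Matrix _ _ R) a b
        rw [h a.1 a.2, Pi.single_apply, Matrix.one_apply]
        by_cases hab : a = b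
        · simp [hab]
        · have : b.1 ≠ a.1 := fun hh => hab (Subtype.ext hh.symm)
          simp [this, hab]
  rw [← Matrix.det_submatrix_equiv_self e M, he,
    Matrix.det_fromBlocks_zero₂₁, Matrix.det_one, mul_one]

/-- `det (B + 1)` equals the sum of all principal minors of `B`. -/
lemma det_add_one_eq_sum_minors {ι R : Type*} [Fintype ι] [DecidableEq ι] [CommRing R]
    (B : Matrix ι ι R) :
    (B + 1).det = ∑ s : Finset ι,
      (B.submatrix (fun a : ↥s => (a : ι)) (fun a : ↥s => (a : ι))).det := by
  classical
  have key := (Matrix.detRowAlternating (R := R) (n := ι)).toMultilinearMap.map_add_univ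
    (B : ι → ι → R) ((1 : Matrix ι ι R) : ι → ι → R)
  have h1 : (B + 1).det =
      ∑ s : Finset ι, (Matrix.of (s.piecewise (B : ι → ι → R) ((1 : Matrix ι ι R)))).det :=
    key
  rw [h1]
  refine Finset.sum_congr rfl fun s _ => ?_
  rw [det_eq_det_submatrix_of_single _ s (fun i hi => by
    show s.piecewise (B : ι → ι → R) ((1 : Matrix ι ι R)) i = Pi.single i 1
    unfold Finset.piecewise; rw [if_neg hi]
    funext j
    rw [Matrix.one_apply, Pi.single_apply]
    exact if_congr eq_comm rfl rfl)]
  congr 1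
  ext a b
  simp [Finset.piecewise_eq_of_mem _ _ _ a.2]
  unfold Finset.piecewise; rw [if_pos a.2]

/-- Determinant of a matrix whose rows are scaled. -/
lemma det_row_scaled {ι R : Type*} [Fintype ι] [DecidableEq ι] [CommRing R]
    (c : ι → R) (M : Matrix ι ι R) :
    (Matrix.of fun i j => c i * M i j).det = (∏ i, c i) * M.det := by
  have : (Matrix.of fun i j => c i * M i j) = Matrix.diagonal c * M := by
    ext i j
    simp [Matrix.mul_apply, Matrix.diagonal_apply, Finset.sum_ite_eq, ite_mul]
  rw [this, Matrix.det_mul, Matrix.det_diagonal]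

/-- `c_k(P,Q) = Σ_{i₁<⋯<i_k} α_{i₁}⋯α_{i_k} det(⟨A_{i_a} − P, A_{i_b} − Q⟩)_{a,b}`, where the
determinant is taken over the matrix indexed by the `k`-element subset `s = {i₁ < ⋯ < i_k}`
(its determinant is independent of the chosen ordering of the index set since rows and
columns are indexed alike). -/
noncomputable def cConst {n d : ℕ} (A : Fin (n + 2) → EuclideanSpace ℝ (Fin d))
    (α : Fin (n + 2) → ℝ) (k : ℕ) (P Q : EuclideanSpace ℝ (Fin d)) : ℝ :=
  ∑ s ∈ Finset.powersetCard k (Finset.univ : Finset (Fin (n + 2))),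
    (∏ i ∈ s, α i) *
      Matrix.det (Matrix.of fun (a b : ↥s) => (inner ℝ (A a.1 - P) (A b.1 - Q) : ℝ))

/-- The generating polynomial `Σ_s (Π_{i∈s} α_i) det(M_s) X^{|s|}`. -/
noncomputable def cPoly {n d : ℕ} (A : Fin (n + 2) → EuclideanSpace ℝ (Fin d))
    (α : Fin (n + 2) → ℝ) (P Q : EuclideanSpace ℝ (Fin d)) : Polynomial ℝ :=
  ∑ s : Finset (Fin (n + 2)),
    Polynomial.C ((∏ i ∈ s, α i) *
      Matrix.det (Matrix.of fun (a b : ↥s) => (inner ℝ (A a.1 - P) (A b.1 - Q) : ℝ)))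
      * Polynomial.X ^ s.card

lemma cPoly_eval {n d : ℕ} (A : Fin (n + 2) → EuclideanSpace ℝ (Fin d))
    (α : Fin (n + 2) → ℝ) (hsum : ∑ i, α i = 0) (hsum2 : ∑ i, α i • A i = 0)
    (P Q : EuclideanSpace ℝ (Fin d)) (x : ℝ) :
    (cPoly A α P Q).eval x =
      ((x • Matrix.of fun t u : Fin d => ∑ j, α j * (A j t * A j u)) + 1).det := by
  classical
  have hinner : ∀ (v w : EuclideanSpace ℝ (Fin d)), (inner ℝ v w : ℝ) = ∑ t, v t * w t := by
    intro v w
    rw [PiLp.inner_apply]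
    simp [RCLike.inner_apply, conj_trivial]
    exact Finset.sum_congr rfl fun _ _ => mul_comm _ _
  have h2 : ∀ t, ∑ j, α j * A j t = 0 := by
    intro t
    have key : ∀ (s : Finset (Fin (n + 2))),
        (∑ i ∈ s, α i • A i) t = ∑ i ∈ s, α i * A i t := by
      intro s
      induction s using Finset.induction_on with
      | empty => simp only [Finset.sum_empty]; rfl
      | insert _ _ h ih =>
        rw [Finset.sum_insert h, Finset.sum_insert h, ← ih]
        rfl
    rw [← key, hsum2]
    rfl
  -- the rectangular factors
  set Cm : Matrix (Fin (n + 2)) (Fin d) ℝ :=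
    Matrix.of fun i t => (x * α i) * (A i t - P t) with hCm
  set Hm : Matrix (Fin d) (Fin (n + 2)) ℝ :=
    Matrix.of fun t j => A j t - Q t with hHm
  have hCH : Cm * Hm =
      Matrix.of fun i j => (x * α i) * (inner ℝ (A i - P) (A j - Q) : ℝ) := by
    ext i j
    simp only [Matrix.mul_apply, Matrix.of_apply]
    rw [hinner, Finset.mul_sum]
    refine Finset.sum_congr rfl fun t _ => ?_
    have hv : (A i - P) t = A i t - P t := rfl
    have hw : (A j - Q) t = A j t - Q t := rfl
    rw [hv, hw]
    simp only [hCm, hHm, Matrix.of_apply]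
    ring
  have hHC : Hm * Cm =
      x • Matrix.of fun t u : Fin d => ∑ j, α j * (A j t * A j u) := by
    ext t u
    rw [Matrix.mul_apply]
    have : ∀ j, Hm t j * Cm j u =
        x * (α j * (A j t * A j u)) - (x * P u) * (α j * A j t)
        - (x * Q t) * (α j * A j u) + (x * Q t * P u) * α j := by
      intro j
      simp only [hCm, hHm, Matrix.of_apply]
      ring
    rw [Finset.sum_congr rfl fun j _ => this j]
    rw [Finset.sum_add_distrib, Finset.sum_sub_distrib, Finset.sum_sub_distrib,
      ← Finset.mul_sum, ← Finset.mul_sum, ← Finset.mul_sum, ← Finset.mul_sum,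
      h2 t, h2 u, hsum]
    simp [Matrix.smul_apply]
  -- evaluate the polynomial
  rw [cPoly]
  rw [← hHC, ← Matrix.det_mul_add_one_comm]
  rw [det_add_one_eq_sum_minors (Cm * Hm)]
  rw [Polynomial.eval_finset_sum]
  refine Finset.sum_congr rfl fun s _ => ?_
  have hsub : (Cm * Hm).submatrix (fun a : ↥s => (a : Fin (n + 2)))
      (fun a : ↥s => (a : Fin (n + 2))) =
      Matrix.of fun (a b : ↥s) =>
        (x * α a.1) *
          (Matrix.of fun (a b : ↥s) => (inner ℝ (A a.1 - P) (A b.1 - Q) : ℝ)) a b := by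
    ext a b
    rw [hCH]
    rfl
  rw [hsub, det_row_scaled, Finset.prod_mul_distrib, Finset.prod_const,
    Finset.prod_coe_sort]
  simp only [Polynomial.eval_mul, Polynomial.eval_C, Polynomial.eval_pow, Polynomial.eval_X]
  rw [Finset.card_univ, Fintype.card_coe]
  ring

/-- If `Σᵢ αᵢ = 0` and `Σᵢ αᵢAᵢ = 0`, then for `1 ≤ k ≤ n` the quantity `c_k(P,Q)` is
independent of the choice of the points `P` and `Q`. -/
theorem cConst_independent {n d : ℕ} (A : Fin (n + 2) → EuclideanSpace ℝ (Fin d))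
    (α : Fin (n + 2) → ℝ) (hsum : ∑ i, α i = 0) (hsum2 : ∑ i, α i • A i = 0)
    (k : ℕ) (hk1 : 1 ≤ k) (hkn : k ≤ n)
    (P Q P' Q' : EuclideanSpace ℝ (Fin d)) :
    cConst A α k P Q = cConst A α k P' Q' := by
  classical
  have hpoly : cPoly A α P Q = cPoly A α P' Q' := by
    apply Polynomial.funext
    intro x
    rw [cPoly_eval A α hsum hsum2 P Q x, cPoly_eval A α hsum hsum2 P' Q' x]
  have hcoeff : ∀ (P Q : EuclideanSpace ℝ (Fin d)),
      cConst A α k P Q = (cPoly A α P Q).coeff k := by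
    intro P Q
    rw [cConst, cPoly, Polynomial.finset_sum_coeff]
    rw [Finset.powersetCard_eq_filter, Finset.sum_filter]
    rw [← Finset.powerset_univ]
    refine Finset.sum_congr rfl fun s _ => ?_
    rw [Polynomial.coeff_C_mul, Polynomial.coeff_X_pow]
    rw [mul_ite, mul_one, mul_zero]
    exact (if_congr eq_comm rfl rfl).symm
  rw [hcoeff P Q, hcoeff P' Q', hpoly]
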